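/- Rado Centerpoint Theorem: for every Borel probability measure μ on ℝ^d there exists a point x ∈ ℝ^d such that μ(H) ≥ 1/(d+1) for every closed half-space H containing x. -/

import Mathlib

open MeasureTheory Set

section RadoAux

variable {E : Type*} [MeasurableSpace E]

/-- Extract an index where the measure of a monotone family exceeds a real threshold. -/
lemma rado_exists_measure_gt (μ : Measure E) [IsProbabilityMeasure μ]
    {s : ℕ → Set E} (hm : Monotone s) {a : ℝ} (ha : 0 ≤ a)
    (h : a < (μ (⋃ n, s n)).toReal) : ∃ n, a < (μ (s n)).toReal := by
  have ht := tendsto_measure_iUnion_atTop (μ := μ) hm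
  have h1 : ENNReal.ofReal a < μ (⋃ n, s n) :=
    (ENNReal.ofReal_lt_iff_lt_toReal ha (measure_ne_top μ _)).2 h
  obtain ⟨n, hn⟩ := (ht.eventually_const_lt h1).exists
  exact ⟨n, (ENNReal.ofReal_lt_iff_lt_toReal ha (measure_ne_top μ _)).1 hn⟩

lemma rado_toReal_compl (μ : Measure E) [IsProbabilityMeasure μ]
    {s : Set E} (hs : MeasurableSet s) :
    (μ sᶜ).toReal = 1 - (μ s).toReal := by
  rw [prob_compl_eq_one_sub hs, ENNReal.toReal_sub_of_le prob_le_one ENNReal.one_ne_top,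
    ENNReal.toReal_one]

lemma rado_compl_lt (μ : Measure E) [IsProbabilityMeasure μ]
    {s : Set E} (hs : MeasurableSet s) {d : ℕ}
    (h : (d : ℝ) / (d + 1) < (μ s).toReal) :
    (μ sᶜ).toReal < 1 / (d + 1) := by
  have hd : (0 : ℝ) < (d : ℝ) + 1 := by positivity
  have key : (d : ℝ) / (d + 1) + 1 / (d + 1) = 1 := by field_simp
  rw [rado_toReal_compl μ hs]
  linarith

/-- If each of at most `d+1` sets has complement measure less than `1/(d+1)`,
their intersection is nonempty. -/
lemma rado_nonempty_iInter (μ : Measure E) [IsProbabilityMeasure μ]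
    {ι : Type*} (F : ι → Set E) (I : Finset ι) {d : ℕ} (hcard : I.card ≤ d + 1)
    (h : ∀ i ∈ I, (μ (F i)ᶜ).toReal < 1 / (d + 1)) :
    (⋂ i ∈ I, F i).Nonempty := by
  have hd : (0 : ℝ) < (d : ℝ) + 1 := by positivity
  have hsum : ∑ i ∈ I, (μ (F i)ᶜ).toReal < 1 := by
    rcases I.eq_empty_or_nonempty with rfl | hI
    · simpa using one_pos
    · calc ∑ i ∈ I, (μ (F i)ᶜ).toReal < ∑ _i ∈ I, 1 / ((d : ℝ) + 1) :=
            Finset.sum_lt_sum_of_nonempty hI h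
        _ = (I.card : ℝ) * (1 / ((d : ℝ) + 1)) := by
            rw [Finset.sum_const, nsmul_eq_mul]
        _ ≤ ((d : ℝ) + 1) * (1 / ((d : ℝ) + 1)) := by
            apply mul_le_mul_of_nonneg_right _ (by positivity)
            exact_mod_cast hcard
        _ = 1 := by field_simp
  have hne : (⋃ i ∈ I, (F i)ᶜ) ≠ univ := by
    intro he
    have h1 : μ (⋃ i ∈ I, (F i)ᶜ) ≤ ∑ i ∈ I, μ (F i)ᶜ := measure_biUnion_finset_le I _
    have hfin : ∑ i ∈ I, μ (F i)ᶜ ≠ ⊤ :=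
      (ENNReal.sum_lt_top.2 fun i _ => measure_lt_top μ _).ne
    have h2 : (μ (⋃ i ∈ I, (F i)ᶜ)).toReal ≤ ∑ i ∈ I, (μ (F i)ᶜ).toReal := by
      rw [← ENNReal.toReal_sum (fun i _ => measure_ne_top μ _)]
      exact ENNReal.toReal_mono hfin h1
    rw [he, measure_univ, ENNReal.toReal_one] at h2
    linarith
  obtain ⟨x, hx⟩ := (ne_univ_iff_exists_notMem _).1 hne
  refine ⟨x, ?_⟩
  simp only [mem_iUnion, mem_compl_iff, not_exists, not_not] at hx
  simp only [mem_iInter]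
  exact hx

end RadoAux

/-- Core of the Rado centerpoint theorem: a point contained in every closed half-space
of measure greater than `d/(d+1)`. -/
theorem rado_core (d : ℕ) (μ : Measure (EuclideanSpace ℝ (Fin d))) [IsProbabilityMeasure μ] :
    ∃ x : EuclideanSpace ℝ (Fin d),
      ∀ (v : EuclideanSpace ℝ (Fin d)) (c : ℝ),
        (d : ℝ) / (d + 1) < (μ {y | c ≤ (inner ℝ v y : ℝ)}).toReal → c ≤ (inner ℝ v x : ℝ) := by
  classical
  have hd : (0 : ℝ) < (d : ℝ) + 1 := by positivity
  have hcl : ∀ (v : EuclideanSpace ℝ (Fin d)) (c : ℝ),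
      IsClosed {y : EuclideanSpace ℝ (Fin d) | c ≤ (inner ℝ v y : ℝ)} := fun v c =>
    isClosed_le continuous_const (Continuous.inner continuous_const continuous_id)
  -- a large closed ball of measure > d/(d+1)
  obtain ⟨R, hR⟩ : ∃ n : ℕ,
      (d : ℝ) / (d + 1) < (μ (Metric.closedBall (0 : EuclideanSpace ℝ (Fin d)) n)).toReal := by
    apply rado_exists_measure_gt μ
      (fun n m hnm => Metric.closedBall_subset_closedBall (by exact_mod_cast hnm))
      (by positivity)
    rw [Metric.iUnion_closedBall_nat, measure_univ, ENNReal.toReal_one]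
    rw [div_lt_one hd]
    linarith
  -- the index type of "heavy" closed half-spaces
  let ι := {p : (EuclideanSpace ℝ (Fin d)) × ℝ //
    (d : ℝ) / (d + 1) < (μ {y | p.2 ≤ (inner ℝ p.1 y : ℝ)}).toReal}
  let F : Option ι → Set (EuclideanSpace ℝ (Fin d)) := fun o =>
    o.elim (Metric.closedBall 0 R) (fun i => {y | i.1.2 ≤ (inner ℝ i.1.1 y : ℝ)})
  have hbound : ∀ o : Option ι, (μ (F o)ᶜ).toReal < 1 / (d + 1) := by
    rintro (_ | i)
    · exact rado_compl_lt μ measurableSet_closedBall hR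
    · exact rado_compl_lt μ (hcl _ _).measurableSet i.2
  have hconv : ∀ o : Option ι, Convex ℝ (F o) := by
    rintro (_ | i)
    · exact convex_closedBall _ _
    · exact convex_halfSpace_ge
        ⟨fun a b => inner_add_right _ _ _, fun r a => real_inner_smul_right _ _ _⟩ _
  -- every finite subfamily of F has nonempty intersection, by Helly
  have hFz : ∀ u : Finset (Option ι), (⋂ o ∈ u, F o).Nonempty := by
    intro u
    apply Convex.helly_theorem' (𝕜 := ℝ) (fun o _ => hconv o)
    intro I _ hIcard
    rw [finrank_euclideanSpace_fin] at hIcard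
    exact rado_nonempty_iInter μ F I hIcard (fun i _ => hbound i)
  -- compactness + finite intersection property
  have hst : ∀ u : Finset ι, ((Metric.closedBall (0 : EuclideanSpace ℝ (Fin d)) R) ∩
      ⋂ i ∈ u, {y : EuclideanSpace ℝ (Fin d) | i.1.2 ≤ (inner ℝ i.1.1 y : ℝ)}).Nonempty := by
    intro u
    obtain ⟨x, hx⟩ := hFz (insert none (u.image some))
    simp only [mem_iInter, Finset.mem_insert, Finset.mem_image] at hx
    refine ⟨x, hx none (Or.inl rfl), ?_⟩
    simp only [mem_iInter]
    intro i hi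
    exact hx (some i) (Or.inr ⟨i, hi, rfl⟩)
  obtain ⟨x, hx⟩ := (isCompact_closedBall (0 : EuclideanSpace ℝ (Fin d)) R).inter_iInter_nonempty
    (fun i : ι => {y | i.1.2 ≤ (inner ℝ i.1.1 y : ℝ)}) (fun i => hcl _ _) hst
  refine ⟨x, fun v c hgt => ?_⟩
  have hxi := hx.2
  simp only [mem_iInter] at hxi
  exact hxi ⟨(v, c), hgt⟩

/-- The Rado Centerpoint Theorem: every Borel probability measure on ℝ^d admits a point
all of whose containing closed half-spaces have measure at least 1/(d+1). -/
theorem stmt15 (d : ℕ) (μ : Measure (EuclideanSpace ℝ (Fin d))) [IsProbabilityMeasure μ] :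
    ∃ x : EuclideanSpace ℝ (Fin d),
      ∀ (v : EuclideanSpace ℝ (Fin d)) (c : ℝ), v ≠ 0 → (inner ℝ v x : ℝ) ≤ c →
        (μ {y : EuclideanSpace ℝ (Fin d) | (inner ℝ v y : ℝ) ≤ c}).toReal ≥ 1 / (d + 1) := by
  obtain ⟨x, hx⟩ := rado_core d μ
  refine ⟨x, fun v c _hv hvc => ?_⟩
  by_contra hlt
  push_neg at hlt
  have hd : (0 : ℝ) < (d : ℝ) + 1 := by positivity
  set A : Set (EuclideanSpace ℝ (Fin d)) := {y | (inner ℝ v y : ℝ) ≤ c} with hA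
  have hAm : MeasurableSet A :=
    (isClosed_le (Continuous.inner continuous_const continuous_id) continuous_const).measurableSet
  have hAc : Aᶜ = {y : EuclideanSpace ℝ (Fin d) | c < (inner ℝ v y : ℝ)} := by
    ext y; simp [hA, not_le]
  have hcompl : (d : ℝ) / (d + 1) < (μ Aᶜ).toReal := by
    rw [rado_toReal_compl μ hAm]
    have key : (d : ℝ) / (d + 1) + 1 / (d + 1) = 1 := by field_simp
    linarith
  -- approximate the open half-space by closed ones
  obtain ⟨n, hn⟩ : ∃ n : ℕ,
      (d : ℝ) / (d + 1) <
        (μ {y : EuclideanSpace ℝ (Fin d) | c + 1 / (n + 1) ≤ (inner ℝ v y : ℝ)}).toReal := by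
    apply rado_exists_measure_gt μ (s := fun n => {y | c + 1 / (n + 1) ≤ (inner ℝ v y : ℝ)})
      ?_ (by positivity) ?_
    · intro n m hnm y hy
      simp only [mem_setOf_eq] at hy ⊢
      have h1 : (1 : ℝ) / (m + 1) ≤ 1 / (n + 1) := by
        apply one_div_le_one_div_of_le (by positivity)
        have : (n : ℝ) ≤ m := by exact_mod_cast hnm
        linarith
      linarith
    · have hU : (⋃ n : ℕ, {y : EuclideanSpace ℝ (Fin d) | c + 1 / (n + 1) ≤ (inner ℝ v y : ℝ)})
          = Aᶜ := by
        rw [hAc]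
        ext y
        simp only [mem_iUnion, mem_setOf_eq]
        constructor
        · rintro ⟨n, hny⟩
          have : (0 : ℝ) < 1 / (n + 1) := by positivity
          linarith
        · intro hy
          obtain ⟨n, hn⟩ := exists_nat_one_div_lt (sub_pos.2 hy)
          exact ⟨n, by linarith⟩
      rw [hU]
      exact hcompl
  have := hx v (c + 1 / (n + 1)) hn
  have hpos : (0 : ℝ) < 1 / ((n : ℝ) + 1) := by positivity
  linarith
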